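/- Let w₁,…,w_k be pairwise commuting nilpotent h×h complex matrices. Then there exists a constant C > 0 such that for every tuple of integers (d₁,…,d_k) ∈ ℤ^k and every ℏ ∈ ℂ with |ℏ| = 1: all the matrices w_i + mℏ with m a nonzero integer are invertible, and the matrix I(d, ℏ) := Π_{i : d_i < 0} Π_{m = d_i + 1}^{0} (w_i + mℏ) · Π_{i : d_i ≥ 0} ( Π_{m=1}^{d_i} (w_i + mℏ) )^{−1} satisfies ‖I(d, ℏ)‖ ≤ C^{Σ_i |d_i|} · (1/D!) if D ≥ 0 and ‖I(d, ℏ)‖ ≤ C^{Σ_i |d_i|} · (−D)! if D ≤ 0, where D = d₁ + ⋯ + d_k and ‖·‖ is the operator norm. -/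

import Mathlib

open scoped BigOperators Matrix.Norms.L2Operator

/-- The coefficient `I(d, ℏ)` of the `I`-function of a toric variety:
`I(d,ℏ) = ∏_{i : d_i < 0} ∏_{m = d_i+1}^{0} (w_i + mℏ) ⬝
∏_{i : d_i ≥ 0} (∏_{m=1}^{d_i} (w_i + mℏ))⁻¹`.  Since all factors commute, the products
(taken here in the order of the indices) are unambiguous. -/
noncomputable def IFunCoeff (k h : ℕ) (w : Fin k → Matrix (Fin h) (Fin h) ℂ)
    (d : Fin k → ℤ) (z : ℂ) : Matrix (Fin h) (Fin h) ℂ :=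
  (List.ofFn (fun i : Fin k =>
    if d i < 0 then
      ((List.range (d i).natAbs).map (fun j =>
        w i + ((d i + 1 + (j : ℤ) : ℤ) : ℂ) • z • (1 : Matrix (Fin h) (Fin h) ℂ))).prod
    else 1)).prod *
  (List.ofFn (fun i : Fin k =>
    if 0 ≤ d i then
      (((List.range (d i).toNat).map (fun m =>
        w i + (((m + 1 : ℕ)) : ℂ) • z • (1 : Matrix (Fin h) (Fin h) ℂ))).prod)⁻¹
    else 1)).prod

namespace IFunAux

lemma list_range_prod {M : Type*} [CommMonoid M] (n : ℕ) (g : ℕ → M) :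
    ((List.range n).map g).prod = ∏ j ∈ Finset.range n, g j := by
  induction n with
  | zero => simp
  | succ n ih => simp [List.range_succ, Finset.prod_range_succ, ih]

lemma range_intCast (n : ℕ) :
    (do let a ← List.range n; pure ((a : ℤ)) : List ℤ)
      = (List.range n).map (fun a : ℕ => (a : ℤ)) := by
  induction n with
  | zero => rfl
  | succ n ih => rw [List.range_succ]; simp_all

lemma prod_range_sub_eq_factorial (n : ℕ) : (∏ j ∈ Finset.range n, (n - j)) = n.factorial := by
  rw [← Nat.descFactorial_eq_prod_range n n, Nat.descFactorial_self]

lemma choose_le_two_pow (n p : ℕ) (hp : p ≤ n) : n.choose p ≤ 2 ^ n := by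
  rw [← Nat.sum_range_choose n]
  exact Finset.single_le_sum (f := fun m => n.choose m) (fun i _ => Nat.zero_le _)
    (Finset.mem_range.mpr (by omega))

lemma factorial_sum_le {ι : Type*} (s : Finset ι) (f : ι → ℕ) :
    (∑ i ∈ s, f i).factorial ≤ 2 ^ (s.card * ∑ i ∈ s, f i) * ∏ i ∈ s, (f i).factorial := by
  classical
  induction s using Finset.induction with
  | empty => simp
  | @insert a s ha ih =>
    rw [Finset.sum_insert ha, Finset.prod_insert ha, Finset.card_insert_of_notMem ha]
    set S := ∑ i ∈ s, f i with hS
    have h1 : (f a + S).factorial = (f a + S).choose (f a) * (f a).factorial * S.factorial := by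
      have := Nat.choose_mul_factorial_mul_factorial (n := f a + S) (k := f a) (by omega)
      rw [← this]; congr 2; omega
    calc (f a + S).factorial
        = (f a + S).choose (f a) * (f a).factorial * S.factorial := h1
      _ ≤ 2 ^ (f a + S) * (f a).factorial * S.factorial := by
          have := choose_le_two_pow (f a + S) (f a) (by omega)
          exact Nat.mul_le_mul_right _ (Nat.mul_le_mul_right _ this)
      _ ≤ 2 ^ (f a + S) * (f a).factorial * (2 ^ (s.card * S) * ∏ i ∈ s, (f i).factorial) := by
          exact Nat.mul_le_mul_left _ ih
      _ ≤ 2 ^ ((s.card + 1) * (f a + S)) * ((f a).factorial * ∏ i ∈ s, (f i).factorial) := by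
          have hexp : 2 ^ (f a + S) * 2 ^ (s.card * S) ≤ 2 ^ ((s.card + 1) * (f a + S)) := by
            rw [← pow_add]
            exact Nat.pow_le_pow_right (by omega) (by ring_nf; omega)
          calc 2 ^ (f a + S) * (f a).factorial * (2 ^ (s.card * S) * ∏ i ∈ s, (f i).factorial)
              = (2 ^ (f a + S) * 2 ^ (s.card * S))
                  * ((f a).factorial * ∏ i ∈ s, (f i).factorial) := by ring
            _ ≤ _ := Nat.mul_le_mul_right _ hexp

lemma prod_factorial_le_factorial_sum {ι : Type*} (s : Finset ι) (f : ι → ℕ) :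
    (∏ i ∈ s, (f i).factorial) ≤ (∑ i ∈ s, f i).factorial :=
  Nat.le_of_dvd (Nat.factorial_pos _) (Nat.prod_factorial_dvd_factorial_sum s f)

variable {h : ℕ}

lemma smul_one_isUnit {c : ℂ} (hc : c ≠ 0) :
    IsUnit (c • (1 : Matrix (Fin h) (Fin h) ℂ)) := by
  have h1 : (c • (1 : Matrix (Fin h) (Fin h) ℂ)) * (c⁻¹ • 1) = 1 := by
    rw [smul_mul_assoc, mul_smul_comm, smul_smul, mul_inv_cancel₀ hc, one_smul, one_mul]
  have h2 : (c⁻¹ • (1 : Matrix (Fin h) (Fin h) ℂ)) * (c • 1) = 1 := by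
    rw [smul_mul_assoc, mul_smul_comm, smul_smul, inv_mul_cancel₀ hc, one_smul, one_mul]
  exact ⟨⟨c • 1, c⁻¹ • 1, h1, h2⟩, rfl⟩

lemma isUnit_factor (w : Matrix (Fin h) (Fin h) ℂ) (hw : IsNilpotent w) {c : ℂ} (hc : c ≠ 0) :
    IsUnit (w + c • (1 : Matrix (Fin h) (Fin h) ℂ)) := by
  refine hw.isUnit_add_right_of_commute (smul_one_isUnit hc) ?_
  exact (Commute.one_right w).smul_right c

lemma inv_norm_le [Nonempty (Fin h)] (w : Matrix (Fin h) (Fin h) ℂ) {n : ℕ} (hw : w ^ n = 0)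
    {c : ℂ} (hc : 1 ≤ ‖c‖) :
    ‖(w + c • (1 : Matrix (Fin h) (Fin h) ℂ))⁻¹‖
      ≤ (∑ j ∈ Finset.range n, ‖w‖ ^ j) / ‖c‖ := by
  have hc0 : c ≠ 0 := by
    intro hc0; rw [hc0] at hc; simp at hc; linarith
  set x : Matrix (Fin h) (Fin h) ℂ := (-c⁻¹) • w with hx
  have hxn : x ^ n = 0 := by rw [hx, smul_pow, hw, smul_zero]
  have hsum : (1 - x) * (∑ j ∈ Finset.range n, x ^ j) = 1 := by
    have h2 := mul_geom_sum x n
    rw [hxn] at h2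
    have h3 : (1 - x) * (∑ j ∈ Finset.range n, x ^ j)
        = -((x - 1) * ∑ j ∈ Finset.range n, x ^ j) := by rw [← neg_mul, neg_sub]
    rw [h3, h2]; simp
  have hfac : w + c • (1 : Matrix (Fin h) (Fin h) ℂ) = c • (1 - x) := by
    rw [smul_sub, hx, smul_smul]
    have : c * -c⁻¹ = -1 := by field_simp
    rw [this, neg_one_smul]
    abel
  have key : (w + c • (1 : Matrix (Fin h) (Fin h) ℂ))
      * (c⁻¹ • ∑ j ∈ Finset.range n, x ^ j) = 1 := by
    rw [hfac, smul_mul_assoc, mul_smul_comm, smul_smul, mul_inv_cancel₀ hc0, one_smul, hsum]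
  rw [Matrix.inv_eq_right_inv key, norm_smul, norm_inv]
  rw [div_eq_inv_mul]
  refine mul_le_mul_of_nonneg_left ?_ (by positivity)
  refine (norm_sum_le _ _).trans ?_
  refine Finset.sum_le_sum fun j _ => ?_
  refine (norm_pow_le x j).trans ?_
  refine pow_le_pow_left₀ (norm_nonneg x) ?_ j
  rw [hx, norm_smul]
  have : ‖-c⁻¹‖ ≤ 1 := by
    rw [norm_neg, norm_inv]
    rw [inv_le_one_iff₀]; right; exact hc
  nlinarith [norm_nonneg w, this, norm_nonneg (-c⁻¹ : ℂ)]

lemma neg_elt_bound [Nonempty (Fin h)] (w : Matrix (Fin h) (Fin h) ℂ) {A : ℝ}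
    (hA : ‖w‖ + 1 ≤ A) (z : ℂ) (hz : ‖z‖ = 1) (d : ℤ) (hd : d < 0) :
    ‖((List.range d.natAbs).map (fun j : ℕ =>
        w + ((d + 1 + (j : ℕ) : ℤ) : ℂ) • z • (1 : Matrix (Fin h) (Fin h) ℂ))).prod‖
      ≤ A ^ d.natAbs * (d.natAbs.factorial : ℝ) := by
  set n := d.natAbs with hn
  have hA1 : 1 ≤ A := by have := norm_nonneg w; linarith
  calc ‖((List.range n).map (fun j : ℕ =>
        w + ((d + 1 + (j : ℕ) : ℤ) : ℂ) • z • (1 : Matrix (Fin h) (Fin h) ℂ))).prod‖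
      ≤ (((List.range n).map (fun j : ℕ =>
        w + ((d + 1 + (j : ℕ) : ℤ) : ℂ) • z • (1 : Matrix (Fin h) (Fin h) ℂ))).map norm).prod :=
        List.norm_prod_le _
    _ = ∏ j ∈ Finset.range n,
        ‖w + ((d + 1 + (j : ℕ) : ℤ) : ℂ) • z • (1 : Matrix (Fin h) (Fin h) ℂ)‖ := by
        rw [List.map_map, list_range_prod]; rfl
    _ ≤ ∏ j ∈ Finset.range n, (A * ((n - j : ℕ) : ℝ)) := by
        refine Finset.prod_le_prod (fun j _ => norm_nonneg _) fun j hj => ?_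
        have hjn : j < n := Finset.mem_range.mp hj
        have habs : ‖((d + 1 + (j : ℕ) : ℤ) : ℂ)‖ = ((n - 1 - j : ℕ) : ℝ) := by
          have hint : (d + 1 + (j : ℕ) : ℤ) = -((n - 1 - j : ℕ) : ℤ) := by omega
          rw [hint, Int.cast_neg, Int.cast_natCast, norm_neg, Complex.norm_natCast]
        have hfac : ‖w + ((d + 1 + (j : ℕ) : ℤ) : ℂ) • z • (1 : Matrix (Fin h) (Fin h) ℂ)‖
            ≤ ‖w‖ + ((n - 1 - j : ℕ) : ℝ) := by
          refine (norm_add_le _ _).trans ?_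
          rw [norm_smul, norm_smul, norm_one, hz, habs]
          ring_nf
          exact le_refl _
        refine hfac.trans ?_
        have h1 : ((n - j : ℕ) : ℝ) = ((n - 1 - j : ℕ) : ℝ) + 1 := by
          have : (n - j : ℕ) = (n - 1 - j : ℕ) + 1 := by omega
          rw [this]; push_cast; ring
        rw [h1]
        have h2 : (0 : ℝ) ≤ ((n - 1 - j : ℕ) : ℝ) := Nat.cast_nonneg _
        nlinarith
    _ = A ^ n * (n.factorial : ℝ) := by
        rw [Finset.prod_mul_distrib, Finset.prod_const, Finset.card_range,
          ← Nat.cast_prod, prod_range_sub_eq_factorial]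

lemma pos_elt_bound [Nonempty (Fin h)] (w : Matrix (Fin h) (Fin h) ℂ) {n' : ℕ} (hw : w ^ n' = 0)
    {K : ℝ} (hKw : (∑ j ∈ Finset.range n', ‖w‖ ^ j) ≤ K) (hK1 : 1 ≤ K)
    (z : ℂ) (hz : ‖z‖ = 1) (n : ℕ) :
    ‖(((List.range n).map (fun m =>
        w + (((m + 1 : ℕ)) : ℂ) • z • (1 : Matrix (Fin h) (Fin h) ℂ))).prod)⁻¹‖
      ≤ K ^ n / (n.factorial : ℝ) := by
  rw [Matrix.list_prod_inv_reverse]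
  refine (List.norm_prod_le _).trans ?_
  rw [List.map_reverse, List.map_reverse, List.prod_reverse, List.map_map, List.map_map,
    list_range_prod]
  calc ∏ j ∈ Finset.range n, (norm ∘ Inv.inv ∘ fun m : ℕ =>
        w + (((m + 1 : ℕ)) : ℂ) • z • (1 : Matrix (Fin h) (Fin h) ℂ)) j
      ≤ ∏ j ∈ Finset.range n, (K / ((j + 1 : ℕ) : ℝ)) := by
        refine Finset.prod_le_prod (fun j _ => norm_nonneg _) fun j hj => ?_
        simp only [Function.comp_apply]
        rw [smul_smul]
        have habs : ‖(((j + 1 : ℕ) : ℂ) * z)‖ = ((j + 1 : ℕ) : ℝ) := by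
          rw [norm_mul, Complex.norm_natCast, hz, mul_one]
        have h1 : (1 : ℝ) ≤ ‖(((j + 1 : ℕ) : ℂ) * z)‖ := by
          rw [habs]; exact_mod_cast Nat.one_le_iff_ne_zero.mpr (Nat.succ_ne_zero j)
        refine (inv_norm_le w hw h1).trans ?_
        rw [habs]
        have hpos : (0 : ℝ) < ((j + 1 : ℕ) : ℝ) := by positivity
        gcongr
    _ = K ^ n / (n.factorial : ℝ) := by
        rw [Finset.prod_div_distrib, Finset.prod_const, Finset.card_range,
          ← Nat.cast_prod, Finset.prod_range_add_one_eq_factorial]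

end IFunAux

set_option maxHeartbeats 1600000 in
open IFunAux in
/-- Let `w₁, …, w_k` be pairwise commuting nilpotent `h × h` complex
matrices.  Then there is `C > 0` such that for all `d ∈ ℤ^k` and all `ℏ` with `|ℏ| = 1`, all
matrices `w_i + mℏ` (`m` a nonzero integer) are invertible and the `I`-function coefficient
satisfies `‖I(d,ℏ)‖ ≤ C^{∑|d_i|}/D!` if `D ≥ 0` and `‖I(d,ℏ)‖ ≤ C^{∑|d_i|} (-D)!` if
`D ≤ 0`, where `D = ∑ d_i` and `‖·‖` is the operator norm. -/
theorem IFunction_coefficient_estimate (k h : ℕ)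
    (w : Fin k → Matrix (Fin h) (Fin h) ℂ)
    (hcomm : ∀ i j, Commute (w i) (w j)) (hnil : ∀ i, IsNilpotent (w i)) :
    ∃ C : ℝ, 0 < C ∧ ∀ (d : Fin k → ℤ) (z : ℂ), ‖z‖ = 1 →
      (∀ (i : Fin k) (m : ℤ), m ≠ 0 →
        IsUnit (w i + ((m : ℤ) : ℂ) • z • (1 : Matrix (Fin h) (Fin h) ℂ))) ∧
      (0 ≤ ∑ i, d i →
        ‖IFunCoeff k h w d z‖
          ≤ C ^ (∑ i, (d i).natAbs) / (Nat.factorial (∑ i, d i).toNat : ℝ)) ∧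
      ((∑ i, d i) ≤ 0 →
        ‖IFunCoeff k h w d z‖
          ≤ C ^ (∑ i, (d i).natAbs) * (Nat.factorial (∑ i, d i).natAbs : ℝ)) := by
  rcases Nat.eq_zero_or_pos h with rfl | hpos
  · -- trivial case `h = 0`
    refine ⟨1, one_pos, fun d z hz => ?_⟩
    have h0 : IFunCoeff k 0 w d z = 0 := Subsingleton.elim _ _
    refine ⟨fun i m hm => isUnit_of_subsingleton _, ?_, ?_⟩
    · intro _; rw [h0, norm_zero]; positivity
    · intro _; rw [h0, norm_zero]; positivity
  haveI : Nonempty (Fin h) := Fin.pos_iff_nonempty.mp hpos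
  -- nilpotency exponents
  have hnil' : ∀ i, ∃ n, w i ^ n = 0 := hnil
  choose ν hν using hnil'
  -- the constants
  set A : ℝ := 1 + ∑ i, ‖w i‖ with hAdef
  set K : ℝ := 1 + ∑ i, ∑ j ∈ Finset.range (ν i), ‖w i‖ ^ j with hKdef
  have hsumA : (0:ℝ) ≤ ∑ i, ‖w i‖ := Finset.sum_nonneg fun i _ => norm_nonneg _
  have hsumK : (0:ℝ) ≤ ∑ i, ∑ j ∈ Finset.range (ν i), ‖w i‖ ^ j :=
    Finset.sum_nonneg fun i _ => Finset.sum_nonneg fun j _ => by positivity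
  have hA1 : (1:ℝ) ≤ A := by rw [hAdef]; linarith
  have hK1 : (1:ℝ) ≤ K := by rw [hKdef]; linarith
  have hAw : ∀ i, ‖w i‖ + 1 ≤ A := by
    intro i
    have h1 : ‖w i‖ ≤ ∑ i, ‖w i‖ :=
      Finset.single_le_sum (fun j _ => norm_nonneg _) (Finset.mem_univ i)
    rw [hAdef]; linarith
  have hKw : ∀ i, (∑ j ∈ Finset.range (ν i), ‖w i‖ ^ j) ≤ K := by
    intro i
    have h1 : (∑ j ∈ Finset.range (ν i), ‖w i‖ ^ j)
        ≤ ∑ i, ∑ j ∈ Finset.range (ν i), ‖w i‖ ^ j :=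
      Finset.single_le_sum (f := fun i => ∑ j ∈ Finset.range (ν i), ‖w i‖ ^ j)
        (fun i _ => Finset.sum_nonneg fun j _ => by positivity) (Finset.mem_univ i)
    rw [hKdef]; linarith
  obtain ⟨C, hCdef⟩ : ∃ C : ℝ, C = 2 ^ (k + 1) * A * K := ⟨_, rfl⟩
  have h2k : (1:ℝ) ≤ 2 ^ k := one_le_pow₀ (by norm_num)
  have hC2A : 2 * A ≤ C := by
    rw [hCdef]
    have h1 : (1:ℝ) ≤ 2 ^ k * K := by nlinarith
    calc 2 * A ≤ 2 * A * (2 ^ k * K) := le_mul_of_one_le_right (by linarith) h1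
      _ = 2 ^ (k + 1) * A * K := by ring
  have hC2K : 2 ^ k * K ≤ C := by
    rw [hCdef]
    have h0 : (0:ℝ) ≤ 2 ^ k * K := by nlinarith
    calc 2 ^ k * K ≤ 2 ^ k * K * (2 * A) := le_mul_of_one_le_right h0 (by linarith)
      _ = 2 ^ (k + 1) * A * K := by ring
  have hC1 : (1:ℝ) ≤ C := by linarith
  have hCpos : (0:ℝ) < C := lt_of_lt_of_le one_pos hC1
  refine ⟨C, hCpos, fun d z hz => ?_⟩
  have hz0 : z ≠ 0 := by intro h0; rw [h0] at hz; simp at hz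
  constructor
  · intro i m hm
    rw [smul_smul]
    exact isUnit_factor (w i) ⟨ν i, hν i⟩ (mul_ne_zero (Int.cast_ne_zero.mpr hm) hz0)
  -- set up notation
  classical
  set sneg := Finset.univ.filter (fun i : Fin k => d i < 0) with hsnegdef
  set spos := Finset.univ.filter (fun i : Fin k => 0 ≤ d i) with hsposdef
  have hflt : Finset.univ.filter (fun i : Fin k => ¬ d i < 0) = spos := by
    rw [hsposdef]
    exact Finset.filter_congr fun i _ => by rw [not_lt]
  set N := ∑ i ∈ sneg, (d i).natAbs with hNdef
  set P := ∑ i ∈ spos, (d i).toNat with hPdef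
  -- the two list bounds
  have h1 : ‖(List.ofFn (fun i : Fin k =>
      if d i < 0 then
        ((List.range (d i).natAbs).map (fun j : ℕ =>
          w i + ((d i + 1 + (j : ℕ) : ℤ) : ℂ) • z • (1 : Matrix (Fin h) (Fin h) ℂ))).prod
      else 1)).prod‖
      ≤ ∏ i, (if d i < 0 then A ^ (d i).natAbs * (((d i).natAbs.factorial : ℕ) : ℝ) else 1) := by
    refine (List.norm_prod_le _).trans ?_
    rw [List.map_ofFn, List.prod_ofFn]
    refine Finset.prod_le_prod (fun i _ => norm_nonneg _) fun i _ => ?_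
    by_cases hdi : d i < 0
    · simp only [Function.comp_apply, if_pos hdi]
      exact neg_elt_bound (w i) (hAw i) z hz (d i) hdi
    · simp only [Function.comp_apply, if_neg hdi, norm_one]
      exact le_refl 1
  have h2 : ‖(List.ofFn (fun i : Fin k =>
      if 0 ≤ d i then
        (((List.range (d i).toNat).map (fun m =>
          w i + (((m + 1 : ℕ)) : ℂ) • z • (1 : Matrix (Fin h) (Fin h) ℂ))).prod)⁻¹
      else 1)).prod‖
      ≤ ∏ i, (if 0 ≤ d i then K ^ (d i).toNat / (((d i).toNat.factorial : ℕ) : ℝ) else 1) := by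
    refine (List.norm_prod_le _).trans ?_
    rw [List.map_ofFn, List.prod_ofFn]
    refine Finset.prod_le_prod (fun i _ => norm_nonneg _) fun i _ => ?_
    by_cases hdi : 0 ≤ d i
    · simp only [Function.comp_apply, if_pos hdi]
      exact pos_elt_bound (w i) (hν i) (hKw i) hK1 z hz (d i).toNat
    · simp only [Function.comp_apply, if_neg hdi, norm_one]
      exact le_refl 1
  -- rewrite IFunCoeff
  have hIF : IFunCoeff k h w d z
      = (List.ofFn (fun i : Fin k =>
          if d i < 0 then
            ((List.range (d i).natAbs).map (fun j : ℕ =>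
              w i + ((d i + 1 + (j : ℕ) : ℤ) : ℂ) • z • (1 : Matrix (Fin h) (Fin h) ℂ))).prod
          else 1)).prod *
        (List.ofFn (fun i : Fin k =>
          if 0 ≤ d i then
            (((List.range (d i).toNat).map (fun m =>
              w i + (((m + 1 : ℕ)) : ℂ) • z • (1 : Matrix (Fin h) (Fin h) ℂ))).prod)⁻¹
          else 1)).prod := by
    unfold IFunCoeff
    simp only [range_intCast, List.map_map]
    rfl
  -- evaluate the products of bounds
  have hprod1 : (∏ i, (if d i < 0 then A ^ (d i).natAbs * (((d i).natAbs.factorial : ℕ) : ℝ)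
        else 1)) ≤ A ^ N * ((N.factorial : ℕ) : ℝ) := by
    rw [← Finset.prod_filter, ← hsnegdef, Finset.prod_mul_distrib,
      Finset.prod_pow_eq_pow_sum, ← hNdef, ← Nat.cast_prod]
    have hfac : (∏ i ∈ sneg, (d i).natAbs.factorial) ≤ N.factorial :=
      prod_factorial_le_factorial_sum sneg _
    have hApow : (0:ℝ) ≤ A ^ N := by positivity
    exact mul_le_mul_of_nonneg_left (by exact_mod_cast hfac) hApow
  have hprod2 : (∏ i, (if 0 ≤ d i then K ^ (d i).toNat / (((d i).toNat.factorial : ℕ) : ℝ)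
        else 1)) = K ^ P / ((∏ i ∈ spos, (d i).toNat.factorial : ℕ) : ℝ) := by
    rw [← Finset.prod_filter, ← hsposdef, Finset.prod_div_distrib,
      Finset.prod_pow_eq_pow_sum, ← hPdef, ← Nat.cast_prod]
  -- main intermediate bound
  set Q : ℕ := ∏ i ∈ spos, (d i).toNat.factorial with hQdef
  have hQpos : (0:ℝ) < (Q : ℝ) := by
    rw [hQdef]; exact_mod_cast Nat.prod_factorial_pos spos _
  have hmain : ‖IFunCoeff k h w d z‖ ≤ (A ^ N * ((N.factorial : ℕ) : ℝ)) * (K ^ P / (Q : ℝ)) := by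
    rw [hIF]
    refine (norm_mul_le _ _).trans ?_
    refine mul_le_mul (h1.trans hprod1) (h2.trans_eq hprod2) (norm_nonneg _) ?_
    positivity
  -- relate Q to P!
  have hQfac : ((P.factorial : ℕ) : ℝ) ≤ 2 ^ (k * P) * (Q : ℝ) := by
    have hb := factorial_sum_le spos (fun i => (d i).toNat)
    rw [← hPdef, ← hQdef] at hb
    have hcard : spos.card ≤ k := by
      calc spos.card ≤ (Finset.univ : Finset (Fin k)).card := Finset.card_le_card (Finset.filter_subset _ _)
        _ = k := by simp
    have hb2 : P.factorial ≤ 2 ^ (k * P) * Q :=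
      hb.trans (Nat.mul_le_mul_right Q (Nat.pow_le_pow_right (by norm_num)
        (Nat.mul_le_mul_right P hcard)))
    exact_mod_cast hb2
  have hPfacpos : (0:ℝ) < ((P.factorial : ℕ) : ℝ) := by exact_mod_cast P.factorial_pos
  have hmain2 : ‖IFunCoeff k h w d z‖
      ≤ A ^ N * ((N.factorial : ℕ) : ℝ) * K ^ P * 2 ^ (k * P) / ((P.factorial : ℕ) : ℝ) := by
    refine hmain.trans ?_
    have hle : A ^ N * ((N.factorial : ℕ) : ℝ) * (K ^ P / (Q : ℝ))
        = (A ^ N * ((N.factorial : ℕ) : ℝ) * K ^ P) / (Q : ℝ) := by ring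
    rw [hle, div_le_div_iff₀ hQpos hPfacpos]
    calc (A ^ N * ((N.factorial : ℕ) : ℝ) * K ^ P) * ((P.factorial : ℕ) : ℝ)
        ≤ (A ^ N * ((N.factorial : ℕ) : ℝ) * K ^ P) * (2 ^ (k * P) * (Q : ℝ)) := by
          refine mul_le_mul_of_nonneg_left hQfac ?_
          positivity
      _ = (A ^ N * ((N.factorial : ℕ) : ℝ) * K ^ P * 2 ^ (k * P)) * (Q : ℝ) := by ring
  -- sum identities
  have hsum_abs : (∑ i, (d i).natAbs) = N + P := by
    rw [← Finset.sum_filter_add_sum_filter_not Finset.univ (fun i => d i < 0)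
      (fun i => (d i).natAbs), hflt, ← hsnegdef, ← hNdef]
    congr 1
    rw [hPdef]
    refine Finset.sum_congr rfl fun i hi => ?_
    rw [hsposdef] at hi
    simp only [Finset.mem_filter] at hi
    omega
  have hsum_d : (∑ i, d i) = (P : ℤ) - (N : ℤ) := by
    rw [← Finset.sum_filter_add_sum_filter_not Finset.univ (fun i => d i < 0) d, hflt,
      ← hsnegdef]
    have e1 : (∑ i ∈ sneg, d i) = -(N : ℤ) := by
      rw [hNdef, Nat.cast_sum, ← Finset.sum_neg_distrib]
      refine Finset.sum_congr rfl fun i hi => ?_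
      rw [hsnegdef] at hi
      simp only [Finset.mem_filter] at hi
      omega
    have e2 : (∑ i ∈ spos, d i) = (P : ℤ) := by
      rw [hPdef, Nat.cast_sum]
      refine Finset.sum_congr rfl fun i hi => ?_
      rw [hsposdef] at hi
      simp only [Finset.mem_filter] at hi
      omega
    rw [e1, e2]; ring
  -- power estimates
  have hE2 : A ^ N * K ^ P * 2 ^ (k * P) * 2 ^ N ≤ C ^ (N + P) := by
    have hgrp : A ^ N * K ^ P * 2 ^ (k * P) * 2 ^ N
        = (2 * A) ^ N * ((2 ^ k) * K) ^ P := by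
      rw [mul_pow, mul_pow, ← pow_mul]
      ring
    rw [hgrp, pow_add]
    refine mul_le_mul (pow_le_pow_left₀ (by positivity) hC2A N)
      (pow_le_pow_left₀ (by positivity) hC2K P) (by positivity) (by positivity)
  have hE1 : A ^ N * K ^ P * 2 ^ (k * P) ≤ C ^ (N + P) := by
    refine le_trans ?_ hE2
    have h1 : (1:ℝ) ≤ 2 ^ N := one_le_pow₀ (by norm_num)
    have h0 : (0:ℝ) ≤ A ^ N * K ^ P * 2 ^ (k * P) := by positivity
    exact le_mul_of_one_le_right h0 h1
  constructor
  · -- case D ≥ 0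
    intro hD
    rw [hsum_d] at hD
    have hNP : N ≤ P := by omega
    have htoNat : (∑ i, d i).toNat = P - N := by omega
    rw [hsum_abs, htoNat]
    refine hmain2.trans ?_
    have hfacpos : (0:ℝ) < (((P - N).factorial : ℕ) : ℝ) := by
      exact_mod_cast (P - N).factorial_pos
    rw [div_le_div_iff₀ hPfacpos hfacpos]
    have hfact : (N.factorial * (P - N).factorial : ℕ) ≤ P.factorial :=
      Nat.le_of_dvd P.factorial_pos (Nat.factorial_mul_factorial_dvd_factorial hNP)
    have hfactR : ((N.factorial : ℕ) : ℝ) * (((P - N).factorial : ℕ) : ℝ)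
        ≤ ((P.factorial : ℕ) : ℝ) := by exact_mod_cast hfact
    calc A ^ N * ((N.factorial : ℕ) : ℝ) * K ^ P * 2 ^ (k * P) * (((P - N).factorial : ℕ) : ℝ)
        = (A ^ N * K ^ P * 2 ^ (k * P))
          * (((N.factorial : ℕ) : ℝ) * (((P - N).factorial : ℕ) : ℝ)) := by ring
      _ ≤ C ^ (N + P) * ((P.factorial : ℕ) : ℝ) :=
          mul_le_mul hE1 hfactR (by positivity) (by positivity)
  · -- case D ≤ 0
    intro hD
    rw [hsum_d] at hD
    have hPN : P ≤ N := by omega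
    have hnatAbs : (∑ i, d i).natAbs = N - P := by
      rw [hsum_d]; omega
    rw [hsum_abs, hnatAbs]
    refine hmain2.trans ?_
    rw [div_le_iff₀ hPfacpos]
    have hch : N.factorial ≤ 2 ^ N * (P.factorial * (N - P).factorial) := by
      have ha := Nat.choose_mul_factorial_mul_factorial hPN
      have hb := choose_le_two_pow N P hPN
      calc N.factorial = N.choose P * P.factorial * (N - P).factorial := ha.symm
        _ ≤ 2 ^ N * P.factorial * (N - P).factorial :=
            Nat.mul_le_mul_right _ (Nat.mul_le_mul_right _ hb)
        _ = 2 ^ N * (P.factorial * (N - P).factorial) := by ring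
    have hchR : ((N.factorial : ℕ) : ℝ)
        ≤ 2 ^ N * (((P.factorial : ℕ) : ℝ) * (((N - P).factorial : ℕ) : ℝ)) := by
      exact_mod_cast hch
    calc A ^ N * ((N.factorial : ℕ) : ℝ) * K ^ P * 2 ^ (k * P)
        = (A ^ N * K ^ P * 2 ^ (k * P)) * ((N.factorial : ℕ) : ℝ) := by ring
      _ ≤ (A ^ N * K ^ P * 2 ^ (k * P))
          * (2 ^ N * (((P.factorial : ℕ) : ℝ) * (((N - P).factorial : ℕ) : ℝ))) := by
          refine mul_le_mul_of_nonneg_left hchR ?_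
          positivity
      _ = (A ^ N * K ^ P * 2 ^ (k * P) * 2 ^ N)
          * (((P.factorial : ℕ) : ℝ) * (((N - P).factorial : ℕ) : ℝ)) := by ring
      _ ≤ C ^ (N + P) * (((P.factorial : ℕ) : ℝ) * (((N - P).factorial : ℕ) : ℝ)) := by
          refine mul_le_mul_of_nonneg_right hE2 ?_
          positivity
      _ = C ^ (N + P) * (((N - P).factorial : ℕ) : ℝ) * ((P.factorial : ℕ) : ℝ) := by ring
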